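/- Let G be a topological group whose underlying space is T1, acting on a set M. Let x ∈ M have finite stabilizer Stab_G(x), and let S ⊆ M be a full Stab_G(x)-subset of M, i.e., S is Stab_G(x)-invariant and whenever g ∈ G, y ∈ S and g • y ∈ S, then g ∈ Stab_G(x). Then there exists an open neighborhood C of the identity in G such that the map C × S → M, (g, y) ↦ g • y, is injective. -/

import Mathlib

/-- Injectivity step in Theorem 4.4: if `G` is a T1 topological group acting on a set `M`,
`x ∈ M` has finite stabilizer and `S` is a full `Stab_G(x)`-subset of `M`, then there is an
open neighborhood `C` of the identity such that `(g, y) ↦ g • y` is injective on `C × S`. -/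
theorem stmt_8 {G M : Type*} [Group G] [TopologicalSpace G] [IsTopologicalGroup G] [T1Space G]
    [MulAction G M] (x : M) (hfin : Finite (MulAction.stabilizer G x))
    (S : Set M)
    (hinv : ∀ g ∈ MulAction.stabilizer G x, ∀ y ∈ S, g • y ∈ S)
    (hfull : ∀ g : G, ∀ y ∈ S, g • y ∈ S → g ∈ MulAction.stabilizer G x) :
    ∃ C : Set G, IsOpen C ∧ (1 : G) ∈ C ∧
      Set.InjOn (fun p : G × M => p.1 • p.2) (C ×ˢ S) := by
  -- The finite set of non-identity stabilizer elements is closed.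
  have hSfin : ((MulAction.stabilizer G x : Set G) \ {1}).Finite := by
    have : (MulAction.stabilizer G x : Set G).Finite := Set.toFinite _
    exact this.diff
  have hclosed : IsClosed ((MulAction.stabilizer G x : Set G) \ {1}) :=
    hSfin.isClosed
  have hU : ((MulAction.stabilizer G x : Set G) \ {1})ᶜ ∈ nhds (1 : G) :=
    hclosed.isOpen_compl.mem_nhds (by simp)
  obtain ⟨V, hVopen, hV1, hVmul⟩ := exists_open_nhds_one_mul_subset hU
  refine ⟨V ∩ V⁻¹, hVopen.inter hVopen.inv, ⟨hV1, by simpa using hV1⟩, ?_⟩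
  rintro ⟨g, y⟩ ⟨hg, hy⟩ ⟨g', y'⟩ ⟨hg', hy'⟩ heq
  simp only at heq
  have hkey : g'⁻¹ * g ∈ MulAction.stabilizer G x := by
    apply hfull _ y hy
    rw [mul_smul, heq, inv_smul_smul]
    exact hy'
  have hmem : g'⁻¹ * g ∈ ((MulAction.stabilizer G x : Set G) \ {1})ᶜ :=
    hVmul (Set.mul_mem_mul hg'.2 hg.1)
  have h1 : g'⁻¹ * g = 1 := by
    by_contra h
    exact hmem ⟨hkey, h⟩
  have hgg : g = g' := by
    have := mul_eq_one_iff_eq_inv.mp h1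
    simpa [eq_comm] using inv_injective (by rw [← this])
  subst hgg
  have : y = y' := smul_left_cancel g heq
  exact Prod.ext rfl this
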